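/- arXiv:1502.02741 — 5 statements merged into one kernel-verified Lean document; each statement's English description precedes it below -/
import Mathlib

section
/- Let $w_0,\dots,w_{m-1}$ be distinct complex numbers, $x_0,\dots,x_{m-1}$ nonzero, $h_t = \sum_{i=0}^{m-1} w_i^t x_i$, $N \geq 2m$, and let $H$ be the $(N-m)\times m$ Hankel matrix $H_{j,k} = h_{j+k}$ and $b = (h_m, h_{m+1},\dots,h_{N-1})^T$. Then a vector $q = (q_0,\dots,q_{m-1})^T$ satisfies $Hq = -b$ if and only if the monic polynomial $q(z) = z^m + \sum_{k=0}^{m-1} q_k z^k$ vanishes at every $w_i$, $i = 0,\dots,m-1$; moreover such a $q$ is unique. -/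
open Matrix

-- Vandermonde injectivity in the "rows = powers" direction
lemma vand_ker {m : ℕ} (w : Fin m → ℂ) (hw : Function.Injective w)
    (c : Fin m → ℂ) (hc : ∀ j : Fin m, ∑ i, c i * w i ^ (j : ℕ) = 0) :
    c = 0 := by
  have hdet : (Matrix.vandermonde w)ᵀ.det ≠ 0 := by
    rw [Matrix.det_transpose]
    exact Matrix.det_vandermonde_ne_zero_iff.2 hw
  have hinj : Function.Injective ((Matrix.vandermonde w)ᵀ.mulVec) :=
    Matrix.mulVec_injective_iff_isUnit.2 ((Matrix.isUnit_iff_isUnit_det _).2 hdet.isUnit)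
  apply hinj
  rw [Matrix.mulVec_zero]
  funext j
  simpa [Matrix.mulVec, dotProduct, Matrix.vandermonde, mul_comm] using hc j

-- Vandermonde injectivity in the "rows = nodes" direction
lemma vand_ker' {m : ℕ} (w : Fin m → ℂ) (hw : Function.Injective w)
    (d : Fin m → ℂ) (hd : ∀ i : Fin m, ∑ k, d k * w i ^ (k : ℕ) = 0) :
    d = 0 := by
  have hdet : (Matrix.vandermonde w).det ≠ 0 := Matrix.det_vandermonde_ne_zero_iff.2 hw
  have hinj : Function.Injective ((Matrix.vandermonde w).mulVec) :=
    Matrix.mulVec_injective_iff_isUnit.2 ((Matrix.isUnit_iff_isUnit_det _).2 hdet.isUnit)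
  apply hinj
  rw [Matrix.mulVec_zero]
  funext i
  simpa [Matrix.mulVec, dotProduct, Matrix.vandermonde, mul_comm] using hd i

theorem stmt_4 (m N : ℕ) (hN : 2 * m ≤ N)
    (w x : Fin m → ℂ) (hw : Function.Injective w) (hx : ∀ i, x i ≠ 0)
    (h : ℕ → ℂ) (hh : ∀ t : ℕ, h t = ∑ i, w i ^ t * x i)
    (H : Matrix (Fin (N - m)) (Fin m) ℂ)
    (hH : ∀ j k, H j k = h ((j : ℕ) + (k : ℕ)))
    (b : Fin (N - m) → ℂ) (hb : ∀ j, b j = h (m + (j : ℕ)))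
    (q : Fin m → ℂ) :
    (H.mulVec q = -b ↔ ∀ i, w i ^ m + ∑ k, q k * w i ^ (k : ℕ) = 0) ∧
      (∃! q' : Fin m → ℂ, H.mulVec q' = -b) := by
  have hmN : m ≤ N - m := by omega
  -- key reformulation, for any vector q'
  have key : ∀ q' : Fin m → ℂ, H.mulVec q' = -b ↔
      ∀ j : Fin (N - m),
        ∑ i, (x i * (w i ^ m + ∑ k, q' k * w i ^ (k : ℕ))) * w i ^ (j : ℕ) = 0 := by
    intro q'
    have expand : ∀ j : Fin (N - m),
        ∑ i, (x i * (w i ^ m + ∑ k, q' k * w i ^ (k : ℕ))) * w i ^ (j : ℕ)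
          = (∑ k : Fin m, (∑ i, w i ^ ((j : ℕ) + (k : ℕ)) * x i) * q' k)
            + ∑ i, w i ^ (m + (j : ℕ)) * x i := by
      intro j
      have step1 : (∑ k : Fin m, (∑ i, w i ^ ((j : ℕ) + (k : ℕ)) * x i) * q' k)
          = ∑ i, ∑ k : Fin m, w i ^ ((j : ℕ) + (k : ℕ)) * x i * q' k := by
        rw [Finset.sum_comm]
        exact Finset.sum_congr rfl fun k _ => Finset.sum_mul _ _ _
      rw [step1, ← Finset.sum_add_distrib]
      refine Finset.sum_congr rfl fun i _ => ?_
      have inner : ∀ k : Fin m, w i ^ ((j : ℕ) + (k : ℕ)) * x i * q' k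
          = (q' k * w i ^ (k : ℕ)) * (x i * w i ^ (j : ℕ)) := fun k => by
        rw [pow_add]; ring
      rw [Finset.sum_congr rfl fun k _ => inner k, ← Finset.sum_mul, pow_add]
      ring
    constructor
    · intro hq j
      have hj := congrFun hq j
      simp only [Matrix.mulVec, dotProduct, hH, hh, hb, Pi.neg_apply] at hj
      linear_combination expand j + hj
    · intro hq
      funext j
      simp only [Matrix.mulVec, dotProduct, hH, hh, hb, Pi.neg_apply]
      linear_combination hq j - expand j
  -- from the reformulated condition, deduce vanishing at every node
  have kernel : ∀ q' : Fin m → ℂ,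
      (∀ j : Fin (N - m),
        ∑ i, (x i * (w i ^ m + ∑ k, q' k * w i ^ (k : ℕ))) * w i ^ (j : ℕ) = 0) →
      ∀ i, w i ^ m + ∑ k, q' k * w i ^ (k : ℕ) = 0 := by
    intro q' hq i
    have hc : (fun i => x i * (w i ^ m + ∑ k, q' k * w i ^ (k : ℕ))) = 0 := by
      apply vand_ker w hw
      intro j
      simpa using hq (Fin.castLE hmN j)
    have := congrFun hc i
    simp only [Pi.zero_apply] at this
    rcases mul_eq_zero.1 this with h1 | h1
    · exact absurd h1 (hx i)
    · exact h1
  have iff1 : H.mulVec q = -b ↔ ∀ i, w i ^ m + ∑ k, q k * w i ^ (k : ℕ) = 0 := by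
    rw [key q]
    constructor
    · exact kernel q
    · intro hv j
      simp [hv]
  refine ⟨iff1, ?_⟩
  -- existence: coefficients of ∏ (X - w i)
  set P : Polynomial ℂ := ∏ i, (Polynomial.X - Polynomial.C (w i)) with hP
  have hPmonic : P.Monic := Polynomial.monic_prod_of_monic _ _ fun i _ => Polynomial.monic_X_sub_C _
  have hPdeg : P.natDegree = m := by
    rw [hP, Polynomial.natDegree_prod _ _ fun i _ => Polynomial.X_sub_C_ne_zero _]
    simp
  have heval : ∀ i, P.eval (w i) = 0 := by
    intro i
    rw [hP, Polynomial.eval_prod]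
    exact Finset.prod_eq_zero (Finset.mem_univ i) (by simp)
  have hvan : ∀ i, w i ^ m + ∑ k : Fin m, P.coeff (k : ℕ) * w i ^ (k : ℕ) = 0 := by
    intro i
    have := heval i
    rw [Polynomial.eval_eq_sum_range, hPdeg, Finset.sum_range_succ] at this
    rw [← this, Fin.sum_univ_eq_sum_range (fun k => P.coeff k * w i ^ k)]
    have : P.coeff m = 1 := by
      have := hPmonic.coeff_natDegree
      rwa [hPdeg] at this
    rw [this]; ring
  refine ⟨fun k => P.coeff (k : ℕ), ?_, ?_⟩
  · exact (key _).mpr fun j => by simp [hvan]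
  · intro y hy
    have hy' := kernel _ ((key y).1 hy)
    have hd : (fun k : Fin m => y k - P.coeff (k : ℕ)) = 0 := by
      apply vand_ker' w hw
      intro i
      have := hy' i
      have h2 := hvan i
      simp only [sub_mul, Finset.sum_sub_distrib]
      linear_combination this - h2
    funext k
    have := congrFun hd k
    simp only [Pi.zero_apply, sub_eq_zero] at this
    exact this
end

section
/- Let $p(z) = z^m + \sum_{k=0}^{m-1} p_k z^k$ be a monic polynomial with companion matrix $C^p$ (the $m \times m$ matrix with ones on the subdiagonal and last column $(-p_0,\dots,-p_{m-1})^T$). Let $w_0,\dots,w_{m-1}$ be distinct complex numbers, $x_0,\dots,x_{m-1}$ nonzero, $h_t = \sum_i w_i^t x_i$, $N \geq 2m$, and let $H(s)$ be the $(N-m)\times m$ Hankel matrix with entries $h_{j+k+s}$, $s \in \{0,1\}$. Then $H(0) C^p = H(1)$ if and only if $p(z) = \prod_{i=0}^{m-1}(z - w_i)$. -/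
open Matrix

theorem stmt_6 (m N : ℕ) (hm : 0 < m) (hN : 2 * m ≤ N)
    (w x : Fin m → ℂ) (hw : Function.Injective w) (hx : ∀ i, x i ≠ 0)
    (h : ℕ → ℂ) (hh : ∀ t : ℕ, h t = ∑ i, w i ^ t * x i)
    (p : Fin m → ℂ)
    (Cp : Matrix (Fin m) (Fin m) ℂ)
    (hCp : ∀ i j, Cp i j =
      if (j : ℕ) = m - 1 then -p i else if (i : ℕ) = (j : ℕ) + 1 then 1 else 0) :
    (Matrix.of fun (j : Fin (N - m)) (k : Fin m) => h ((j : ℕ) + (k : ℕ))) * Cp =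
        (Matrix.of fun (j : Fin (N - m)) (k : Fin m) => h ((j : ℕ) + (k : ℕ) + 1)) ↔
      ∀ z : ℂ, z ^ m + ∑ k, p k * z ^ (k : ℕ) = ∏ i, (z - w i) := by
  classical
  set c : Fin m → ℂ := fun i => (w i ^ m + ∑ k, p k * w i ^ (k : ℕ)) * x i with hc
  -- key sum identity
  have key : ∀ j : ℕ, h (j + m) + ∑ l : Fin m, p l * h (j + (l : ℕ)) = ∑ i, c i * w i ^ j := by
    intro j
    simp only [hh, Finset.mul_sum]
    rw [Finset.sum_comm, ← Finset.sum_add_distrib]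
    refine Finset.sum_congr rfl fun i _ => ?_
    have hstep : ∀ l : Fin m, p l * (w i ^ (j + (l : ℕ)) * x i)
        = p l * w i ^ (l : ℕ) * (w i ^ j * x i) := fun l => by rw [pow_add]; ring
    rw [Finset.sum_congr rfl fun l _ => hstep l, ← Finset.sum_mul, hc, pow_add]
    ring
  -- the single-entry lemma for columns k with k+1 < m
  have single : ∀ (j : Fin (N - m)) (k : Fin m), ((k : ℕ) + 1 < m) →
      ∑ l : Fin m, h ((j : ℕ) + (l : ℕ)) * (if (l : ℕ) = (k : ℕ) + 1 then 1 else 0)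
        = h ((j : ℕ) + (k : ℕ) + 1) := by
    intro j k hk
    rw [Finset.sum_eq_single (⟨(k : ℕ) + 1, hk⟩ : Fin m)]
    · simp [add_assoc]
    · intro l _ hl
      rw [if_neg, mul_zero]
      exact fun hcon => hl (Fin.ext hcon)
    · simp
  -- matrix equation ↔ vanishing sums
  have main : ((Matrix.of fun (j : Fin (N - m)) (k : Fin m) => h ((j : ℕ) + (k : ℕ))) * Cp =
        (Matrix.of fun (j : Fin (N - m)) (k : Fin m) => h ((j : ℕ) + (k : ℕ) + 1))) ↔
      ∀ j : Fin (N - m), ∑ i, c i * w i ^ (j : ℕ) = 0 := by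
    constructor
    · intro H j
      have hlast : (m - 1 : ℕ) < m := by omega
      have := congrFun (congrFun H j) ⟨m - 1, hlast⟩
      rw [Matrix.mul_apply] at this
      simp only [Matrix.of_apply, hCp] at this
      have hsum : ∑ l : Fin m, h ((j : ℕ) + (l : ℕ)) * (-p l)
          = h ((j : ℕ) + (m - 1) + 1) := by simpa using this
      have hm1 : (j : ℕ) + (m - 1) + 1 = (j : ℕ) + m := by omega
      rw [hm1] at hsum
      rw [← key (j : ℕ)]
      have : ∑ l : Fin m, h ((j : ℕ) + (l : ℕ)) * (-p l)
          = -∑ l : Fin m, p l * h ((j : ℕ) + (l : ℕ)) := by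
        rw [← Finset.sum_neg_distrib]
        exact Finset.sum_congr rfl fun l _ => by ring
      rw [this] at hsum
      linear_combination -hsum
    · intro H
      ext j k
      rw [Matrix.mul_apply]
      simp only [Matrix.of_apply, hCp]
      by_cases hk : (k : ℕ) = m - 1
      · have hm1 : (j : ℕ) + (k : ℕ) + 1 = (j : ℕ) + m := by omega
        have e1 : ∑ l : Fin m, h ((j : ℕ) + (l : ℕ)) *
              (if (k : ℕ) = m - 1 then -p l else if (l : ℕ) = (k : ℕ) + 1 then 1 else 0)
            = -∑ l : Fin m, p l * h ((j : ℕ) + (l : ℕ)) := by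
          rw [← Finset.sum_neg_distrib]
          exact Finset.sum_congr rfl fun l _ => by rw [if_pos hk]; ring
        rw [e1, hm1]
        have hsum := key (j : ℕ)
        rw [H j] at hsum
        linear_combination -hsum
      · have hk' : (k : ℕ) + 1 < m := by have := k.isLt; omega
        have hrw : ∀ l : Fin m,
            (if (k : ℕ) = m - 1 then -p l else if (l : ℕ) = (k : ℕ) + 1 then (1:ℂ) else 0)
              = if (l : ℕ) = (k : ℕ) + 1 then 1 else 0 := fun l => by rw [if_neg hk]
        calc ∑ l : Fin m, h ((j : ℕ) + (l : ℕ)) *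
              (if (k : ℕ) = m - 1 then -p l else if (l : ℕ) = (k : ℕ) + 1 then 1 else 0)
            = ∑ l : Fin m, h ((j : ℕ) + (l : ℕ)) * (if (l : ℕ) = (k : ℕ) + 1 then 1 else 0) :=
              Finset.sum_congr rfl fun l _ => by rw [hrw l]
          _ = h ((j : ℕ) + (k : ℕ) + 1) := single j k hk'
  -- vanishing sums ↔ roots
  have croots : (∀ j : Fin (N - m), ∑ i, c i * w i ^ (j : ℕ) = 0) ↔
      ∀ i, w i ^ m + ∑ k, p k * w i ^ (k : ℕ) = 0 := by
    constructor
    · intro H i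
      have hmN : m ≤ N - m := by omega
      have hc0 : c = 0 := by
        apply Matrix.eq_zero_of_forall_pow_sum_mul_pow_eq_zero hw
        intro i'
        exact H ⟨(i' : ℕ), lt_of_lt_of_le i'.isLt hmN⟩
      have := congrFun hc0 i
      rcases mul_eq_zero.mp this with h' | h'
      · exact h'
      · exact absurd h' (hx i)
    · intro H j
      have : ∀ i, c i = 0 := fun i => by rw [hc]; simp [H i]
      simp [this]
  -- roots ↔ polynomial identity
  have rootsIff : (∀ i, w i ^ m + ∑ k, p k * w i ^ (k : ℕ) = 0) ↔
      ∀ z : ℂ, z ^ m + ∑ k, p k * z ^ (k : ℕ) = ∏ i, (z - w i) := by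
    constructor
    · intro hr
      set Q : Polynomial ℂ := ∏ i, (Polynomial.X - Polynomial.C (w i)) with hQ
      set P : Polynomial ℂ :=
        Polynomial.X ^ m + (∑ k : Fin m, Polynomial.C (p k) * Polynomial.X ^ (k : ℕ)) - Q with hP
      have hQm : Q.Monic := Polynomial.monic_prod_of_monic _ _ fun i _ => Polynomial.monic_X_sub_C _
      have hQd : Q.natDegree = m := by
        rw [hQ, Polynomial.natDegree_prod _ _ fun i _ => Polynomial.X_sub_C_ne_zero _]
        simp
      have h1 : (Polynomial.X ^ m - Q : Polynomial ℂ).degree < ((m : ℕ) : WithBot ℕ) := by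
        have := Polynomial.degree_sub_lt (p := (Polynomial.X ^ m : Polynomial ℂ)) (q := Q)
          (by rw [Polynomial.degree_X_pow, Polynomial.degree_eq_natDegree hQm.ne_zero, hQd])
          (pow_ne_zero m Polynomial.X_ne_zero)
          (by rw [Polynomial.leadingCoeff_X_pow, hQm.leadingCoeff])
        rwa [Polynomial.degree_X_pow] at this
      have h2 : (∑ k : Fin m, Polynomial.C (p k) * Polynomial.X ^ (k : ℕ)).degree < ((m : ℕ) : WithBot ℕ) := by
        refine lt_of_le_of_lt (Polynomial.degree_sum_le _ _) ?_
        rw [Finset.sup_lt_iff (by exact_mod_cast WithBot.bot_lt_coe m)]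
        intro k _
        exact lt_of_le_of_lt (Polynomial.degree_C_mul_X_pow_le _ _)
          (by exact_mod_cast k.isLt)
      have hdeg : P.degree < ((m : ℕ) : WithBot ℕ) := by
        have hre : P = (Polynomial.X ^ m - Q) +
            (∑ k : Fin m, Polynomial.C (p k) * Polynomial.X ^ (k : ℕ)) := by rw [hP]; ring
        rw [hre]
        exact lt_of_le_of_lt (Polynomial.degree_add_le _ _) (max_lt h1 h2)
      have heval : ∀ i, P.eval (w i) = 0 := by
        intro i
        have hz : Q.eval (w i) = 0 := by
          rw [hQ, Polynomial.eval_prod]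
          exact Finset.prod_eq_zero (Finset.mem_univ i) (by simp)
        simp [hP, Polynomial.eval_finset_sum, hz, hr i]
      have hzero : P = 0 := by
        by_cases hP0 : P = 0
        · exact hP0
        · exact Polynomial.eq_zero_of_natDegree_lt_card_of_eval_eq_zero P hw heval
            (by rw [Fintype.card_fin]; exact (Polynomial.natDegree_lt_iff_degree_lt hP0).mpr hdeg)
      intro z
      have := congrArg (Polynomial.eval z) hzero
      simp only [hP, hQ, Polynomial.eval_sub, Polynomial.eval_add, Polynomial.eval_pow,
        Polynomial.eval_X, Polynomial.eval_finset_sum, Polynomial.eval_mul, Polynomial.eval_C,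
        Polynomial.eval_prod, Polynomial.eval_zero] at this
      linear_combination this
    · intro hz i
      rw [hz (w i)]
      exact Finset.prod_eq_zero (Finset.mem_univ i) (sub_self _)
  rw [main, croots, rootsIff]
end

section
/- Let $f: [0,1) \to \mathbb{R}$ satisfy $f(\xi) = f(1-\xi)$ for $\xi \in (0,1)$ and $f$ strictly decreasing on $[0,1/2]$. Let $m$ be odd, $m > 1$, and $\xi \in [0,1)$ with $\xi \neq 0$ and $\xi \neq 1/2$. Then the $m$ values $f\left(\frac{\xi + i}{m} \bmod 1\right)$, $i = 0,\dots,m-1$, are pairwise distinct. -/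
lemma key_7 (f : ℝ → ℝ)
    (hsym : ∀ ξ ∈ Set.Ioo (0:ℝ) 1, f ξ = f (1 - ξ))
    (hmono : StrictAntiOn f (Set.Icc (0:ℝ) (1/2)))
    {x y : ℝ} (hx : x ∈ Set.Ico (0:ℝ) 1) (hy : y ∈ Set.Ico (0:ℝ) 1)
    (h : f x = f y) : x = y ∨ x + y = 1 := by
  obtain ⟨hx0, hx1⟩ := hx
  obtain ⟨hy0, hy1⟩ := hy
  rcases le_or_gt x (1/2) with hxh | hxh <;> rcases le_or_gt y (1/2) with hyh | hyh
  · left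
    exact hmono.injOn ⟨hx0, hxh⟩ ⟨hy0, hyh⟩ h
  · right
    have hy' : f y = f (1 - y) := hsym y ⟨by linarith, hy1⟩
    have := hmono.injOn ⟨hx0, hxh⟩ (⟨by linarith, by linarith⟩ : 1 - y ∈ Set.Icc (0:ℝ) (1/2)) (h.trans hy')
    linarith
  · right
    have hx' : f x = f (1 - x) := hsym x ⟨by linarith, hx1⟩
    have := hmono.injOn (⟨by linarith, by linarith⟩ : 1 - x ∈ Set.Icc (0:ℝ) (1/2)) ⟨hy0, hyh⟩ (hx'.symm.trans h)
    linarith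
  · left
    have hx' : f x = f (1 - x) := hsym x ⟨by linarith, hx1⟩
    have hy' : f y = f (1 - y) := hsym y ⟨by linarith, hy1⟩
    have := hmono.injOn (⟨by linarith, by linarith⟩ : 1 - x ∈ Set.Icc (0:ℝ) (1/2))
      (⟨by linarith, by linarith⟩ : 1 - y ∈ Set.Icc (0:ℝ) (1/2)) (hx'.symm.trans (h.trans hy'))
    linarith

theorem stmt_7 (m : ℕ) (hm : 1 < m) (hodd : Odd m) (f : ℝ → ℝ)
    (hsym : ∀ ξ ∈ Set.Ioo (0:ℝ) 1, f ξ = f (1 - ξ))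
    (hmono : StrictAntiOn f (Set.Icc (0:ℝ) (1/2)))
    (ξ : ℝ) (hξ : ξ ∈ Set.Ico (0:ℝ) 1) (h0 : ξ ≠ 0) (hhalf : ξ ≠ 1/2) :
    Function.Injective (fun i : Fin m => f ((ξ + (i : ℕ)) / m)) := by
  obtain ⟨hξ0, hξ1⟩ := hξ
  have hm0 : (0:ℝ) < m := by positivity
  intro i j h
  simp only at h
  have hi : (i : ℝ) ≤ m - 1 := by
    have := i.2
    have : (i : ℝ) < m := by exact_mod_cast this
    have hi' : (i : ℕ) + 1 ≤ m := i.2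
    have : ((i : ℕ) : ℝ) + 1 ≤ m := by exact_mod_cast hi'
    linarith
  have hj : (j : ℝ) ≤ m - 1 := by
    have hj' : (j : ℕ) + 1 ≤ m := j.2
    have : ((j : ℕ) : ℝ) + 1 ≤ m := by exact_mod_cast hj'
    linarith
  have hiR : (0:ℝ) ≤ (i : ℕ) := by positivity
  have hjR : (0:ℝ) ≤ (j : ℕ) := by positivity
  have hxmem : (ξ + (i:ℕ)) / m ∈ Set.Ico (0:ℝ) 1 := by
    constructor
    · positivity
    · rw [div_lt_one hm0]; linarith
  have hymem : (ξ + (j:ℕ)) / m ∈ Set.Ico (0:ℝ) 1 := by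
    constructor
    · positivity
    · rw [div_lt_one hm0]; linarith
  rcases key_7 f hsym hmono hxmem hymem h with heq | hsum
  · field_simp at heq
    have : (i : ℕ) = (j : ℕ) := by exact_mod_cast add_left_cancel heq
    exact Fin.ext this
  · exfalso
    have h2 : 2 * ξ = (m:ℝ) - (i:ℕ) - (j:ℕ) := by
      field_simp at hsum
      linarith
    have hk : 2 * ξ = (((m:ℤ) - (i:ℕ) - (j:ℕ) : ℤ) : ℝ) := by push_cast; linarith
    set k : ℤ := (m:ℤ) - (i:ℕ) - (j:ℕ) with hkdef
    have hk0 : (0:ℝ) ≤ (k:ℝ) := by rw [← hk]; linarith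
    have hk2 : (k:ℝ) < 2 := by rw [← hk]; linarith
    have hk0' : 0 ≤ k := by exact_mod_cast hk0
    have hk2' : k < 2 := by exact_mod_cast hk2
    interval_cases k
    · apply h0; norm_num at hk; linarith
    · apply hhalf; norm_num at hk; linarith
end

section
/- Let $w_0,\dots,w_{m-1}$ be distinct complex numbers with $|w_i| \leq 1$, let $x_0,\dots,x_{m-1}$ be nonzero complex numbers, and set $H = \frac{1}{m}V^T \mathrm{diag}(x) V$ where $V$ is the $m\times m$ Vandermonde matrix $V_{k,i} = w_k^i$. Then $\|H^{-1}\|_\infty \geq m \cdot \max_{0\leq i \leq m-1} \frac{\delta_i}{|x_i|}$, where $\delta_i = \prod_{j\neq i} |w_i - w_j|^{-1}$. -/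
open Matrix

/-- The `ℓ∞` operator norm of a square matrix: maximal absolute row sum. -/
noncomputable def matInfNorm {m : ℕ} (A : Matrix (Fin m) (Fin m) ℂ) : ℝ :=
  ⨆ i, ∑ j, ‖A i j‖

theorem stmt_16 (m : ℕ) (hm : 0 < m) (w x : Fin m → ℂ)
    (hw : Function.Injective w) (hwb : ∀ i, ‖w i‖ ≤ 1) (hx : ∀ i, x i ≠ 0)
    (V H : Matrix (Fin m) (Fin m) ℂ) (hV : ∀ k i, V k i = w k ^ (i : ℕ))
    (hH : H = (1 / m : ℂ) • (Vᵀ * Matrix.diagonal x * V)) :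
    (m : ℝ) * (⨆ i, (∏ j ∈ Finset.univ.erase i, ‖w i - w j‖)⁻¹ /
        ‖x i‖) ≤ matInfNorm H⁻¹ := by
  classical
  have hmC : (m : ℂ) ≠ 0 := Nat.cast_ne_zero.mpr hm.ne'
  -- Lagrange basis polynomials and the inverse Vandermonde
  set L : Fin m → Polynomial ℂ := fun i => Lagrange.basis Finset.univ w i with hLdef
  set W : Matrix (Fin m) (Fin m) ℂ := Matrix.of (fun j i => (L i).coeff (j : ℕ)) with hWdef
  have hinj : Set.InjOn w ↑(Finset.univ : Finset (Fin m)) := hw.injOn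
  have hdegL : ∀ i, (L i).natDegree = m - 1 := by
    intro i
    have := Lagrange.natDegree_basis hinj (Finset.mem_univ i)
    simpa using this
  have hVW : V * W = 1 := by
    ext k i
    have : (V * W) k i = Polynomial.eval (w k) (L i) := by
      rw [Matrix.mul_apply]
      rw [Polynomial.eval_eq_sum_range' (n := m) (by rw [hdegL i]; omega)]
      rw [← Fin.sum_univ_eq_sum_range (fun j => (L i).coeff j * (w k) ^ j) m]
      exact Finset.sum_congr rfl fun j _ => by simp [hV, hWdef, mul_comm]
    rw [this, Matrix.one_apply]
    by_cases hki : k = i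
    · subst hki
      simp [hLdef, Lagrange.eval_basis_self hinj (Finset.mem_univ k)]
    · simp [hLdef, Lagrange.eval_basis_of_ne (Ne.symm hki) (Finset.mem_univ k), hki]
  -- V is the Vandermonde matrix; determinants nonzero
  have hVv : V = Matrix.vandermonde w := by
    ext k i; simp [hV, Matrix.vandermonde]
  have hdetV : V.det ≠ 0 := by
    rw [hVv, Matrix.det_vandermonde]
    apply Finset.prod_ne_zero_iff.mpr
    intro i _
    apply Finset.prod_ne_zero_iff.mpr
    intro j hj
    have hij : i < j := Finset.mem_Ioi.mp hj
    exact sub_ne_zero_of_ne fun h => absurd (hw h) hij.ne'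
  have hdetH : H.det ≠ 0 := by
    rw [hH, Matrix.det_smul, Matrix.det_mul, Matrix.det_mul, Matrix.det_transpose,
      Matrix.det_diagonal]
    refine mul_ne_zero (pow_ne_zero _ (by simpa using hmC)) ?_
    exact mul_ne_zero (mul_ne_zero hdetV (Finset.prod_ne_zero_iff.mpr fun i _ => hx i)) hdetV
  have hHinv : H⁻¹ * H = 1 := Matrix.nonsing_inv_mul H (isUnit_iff_ne_zero.mpr hdetH)
  -- leading coefficient of the Lagrange basis polynomials
  let kk : Fin m := ⟨m - 1, Nat.sub_lt hm one_pos⟩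
  have hkk : (kk : ℕ) = m - 1 := rfl
  have hlead : ∀ i, (L i).coeff (m - 1) = ∏ j ∈ Finset.univ.erase i, (w i - w j)⁻¹ := by
    intro i
    have h1 : (L i).coeff (m - 1) = (L i).leadingCoeff := by
      rw [Polynomial.leadingCoeff, hdegL i]
    rw [h1, hLdef]
    show (Lagrange.basis Finset.univ w i).leadingCoeff = _
    rw [Lagrange.basis, Polynomial.leadingCoeff_prod]
    refine Finset.prod_congr rfl fun j hj => ?_
    rw [Lagrange.basisDivisor, Polynomial.leadingCoeff_mul, Polynomial.leadingCoeff_C,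
      (Polynomial.monic_X_sub_C (w j)).leadingCoeff, mul_one]
  -- the key vector computation
  have key : ∀ i : Fin m, ∀ k : Fin m,
      (H⁻¹ *ᵥ fun j => w i ^ (j : ℕ)) k = ((m : ℂ) / x i) * W k i := by
    intro i k
    set u : Fin m → ℂ := fun k => ((m : ℂ) / x i) * W k i with hu
    have hVu : V *ᵥ u = fun k => ((m : ℂ) / x i) * (if k = i then 1 else 0) := by
      funext k'
      simp only [Matrix.mulVec, dotProduct, hu]
      rw [show ∑ j, V k' j * (((m:ℂ)/x i) * W j i)
          = ((m:ℂ)/x i) * ∑ j, V k' j * W j i by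
            rw [Finset.mul_sum]; exact Finset.sum_congr rfl fun j _ => by ring]
      rw [show ∑ j, V k' j * W j i = (V * W) k' i from (Matrix.mul_apply).symm, hVW,
        Matrix.one_apply]
    have hDu : Matrix.diagonal x *ᵥ (fun k => ((m : ℂ)/x i) * (if k = i then 1 else 0))
        = fun j => if j = i then (m : ℂ) else 0 := by
      funext j
      rw [Matrix.mulVec_diagonal]
      by_cases hji : j = i
      · subst hji; simp only [eq_self_iff_true, if_true, mul_one]; rw [mul_div_cancel₀ _ (hx _)]
      · simp [hji]
    have hVDu : Vᵀ *ᵥ (fun j => if j = i then (m : ℂ) else 0)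
        = fun (k : Fin m) => (m : ℂ) * w i ^ (k : ℕ) := by
      funext k'
      simp only [Matrix.mulVec, dotProduct, Matrix.transpose_apply, mul_ite, mul_zero]
      rw [Finset.sum_ite_eq' Finset.univ i (fun j => V j k' * m)]
      simp [hV, mul_comm]
    have hHu : H *ᵥ u = fun (j : Fin m) => w i ^ (j : ℕ) := by
      rw [hH, Matrix.smul_mulVec, ← Matrix.mulVec_mulVec, ← Matrix.mulVec_mulVec, hVu,
        hDu, hVDu]
      funext k'
      simp only [Pi.smul_apply, smul_eq_mul]
      field_simp
    calc (H⁻¹ *ᵥ fun j => w i ^ (j : ℕ)) k = (H⁻¹ *ᵥ (H *ᵥ u)) k := by rw [hHu]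
      _ = ((H⁻¹ * H) *ᵥ u) k := by rw [Matrix.mulVec_mulVec]
      _ = u k := by rw [hHinv, Matrix.one_mulVec]
  -- per-index bound
  have main : ∀ i : Fin m,
      (m : ℝ) * ((∏ j ∈ Finset.univ.erase i, ‖w i - w j‖)⁻¹ / ‖x i‖)
        ≤ matInfNorm H⁻¹ := by
    intro i
    have habs : ‖((m : ℂ) / x i) * W kk i‖
        = (m : ℝ) * ((∏ j ∈ Finset.univ.erase i, ‖w i - w j‖)⁻¹
            / ‖x i‖) := by
      have hW : W kk i = ∏ j ∈ Finset.univ.erase i, (w i - w j)⁻¹ := by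
        simp only [hWdef, Matrix.of_apply]
        exact hlead i
      rw [hW, norm_mul, norm_div, norm_prod]
      simp only [norm_inv]
      rw [Finset.prod_inv_distrib]
      simp [Complex.norm_natCast]
      ring
    have hle1 : ‖((m : ℂ) / x i) * W kk i‖
        ≤ ∑ j, ‖H⁻¹ kk j‖ := by
      rw [← key i kk]
      calc ‖(H⁻¹ *ᵥ fun j => w i ^ (j : ℕ)) kk‖
          = ‖∑ j, H⁻¹ kk j * w i ^ (j : ℕ)‖ := rfl
        _ ≤ ∑ j, ‖H⁻¹ kk j * w i ^ (j : ℕ)‖ := norm_sum_le _ _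
        _ ≤ ∑ j, ‖H⁻¹ kk j‖ := by
            refine Finset.sum_le_sum fun j _ => ?_
            rw [norm_mul]
            nth_rewrite 2 [show ‖H⁻¹ kk j‖
              = ‖H⁻¹ kk j‖ * 1 from (mul_one _).symm]
            refine mul_le_mul_of_nonneg_left ?_ (norm_nonneg _)
            rw [norm_pow]
            exact pow_le_one₀ (norm_nonneg _) (hwb i)
    have hle2 : ∑ j, ‖H⁻¹ kk j‖ ≤ matInfNorm H⁻¹ :=
      le_ciSup (f := fun k => ∑ j, ‖H⁻¹ k j‖) (Set.Finite.bddAbove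
        (Set.finite_range _)) kk
    rw [← habs]
    exact hle1.trans hle2
  -- combine over the supremum
  have hne : Nonempty (Fin m) := ⟨⟨0, hm⟩⟩
  have hmpos : (0 : ℝ) < m := Nat.cast_pos.mpr hm
  rw [mul_comm]
  rw [← le_div_iff₀ hmpos]
  apply ciSup_le
  intro i
  rw [le_div_iff₀ hmpos]
  rw [mul_comm]
  exact main i
end

section
/- Let $m \leq L \leq N - m$, let $w_0,\dots,w_{m-1}$ be distinct complex numbers, $x_0,\dots,x_{m-1}$ nonzero, $h_t = \sum_i w_i^t x_i$, and let $H(s)$ be the $(N-L)\times L$ Hankel matrix with entries $h_{j+k+s}$ for $s \in \{0,1\}$. Then the $L \times L$ matrix $H(0)^+ H(1)$ (where $+$ denotes Moore–Penrose pseudoinverse) has eigenvalues exactly $w_0,\dots,w_{m-1}$ together with $0$ with multiplicity $L - m$. -/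
open Matrix Polynomial

lemma det_smul_one_sub_mul {K : Type*} [Field K] {L m : ℕ} (hm : m ≤ L)
    {t : K} (ht0 : t ≠ 0) (U : Matrix (Fin L) (Fin m) K) (V : Matrix (Fin m) (Fin L) K) :
    (t • (1 : Matrix (Fin L) (Fin L) K) - U * V).det
      = t ^ (L - m) * (t • (1 : Matrix (Fin m) (Fin m) K) - V * U).det := by
  have key : ∀ {a : ℕ} (M : Matrix (Fin a) (Fin a) K),
      (t • (1 : Matrix (Fin a) (Fin a) K)) - M = t • (1 + ((-t⁻¹) • M)) := by
    intro a M
    rw [smul_add, smul_smul, mul_neg, mul_inv_cancel₀ ht0, neg_one_smul, sub_eq_add_neg]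
  rw [key, key, Matrix.det_smul, Matrix.det_smul,
    show ((-t⁻¹) • (U * V)) = ((-t⁻¹) • U) * V from (Matrix.smul_mul _ _ _).symm,
    Matrix.det_one_add_mul_comm, Matrix.mul_smul]
  simp only [Fintype.card_fin]
  rw [← mul_assoc, ← pow_add, Nat.sub_add_cancel hm]

set_option synthInstance.maxHeartbeats 1000000 in
lemma charpoly_rect {L m : ℕ} (hm : m ≤ L) (U : Matrix (Fin L) (Fin m) ℂ) (V : Matrix (Fin m) (Fin L) ℂ) :
    (U * V).charpoly = X ^ (L - m) * (V * U).charpoly := by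
  set f : ℂ[X] →+* RatFunc ℂ := algebraMap ℂ[X] (RatFunc ℂ) with hf
  set c : ℂ →+* RatFunc ℂ := f.comp Polynomial.C with hc
  apply RatFunc.algebraMap_injective ℂ
  set t : RatFunc ℂ := f X with ht
  have ht0 : t ≠ 0 := by
    simp only [ht]
    exact fun hxx => X_ne_zero ((map_eq_zero_iff _ (RatFunc.algebraMap_injective ℂ)).mp hxx)
  have hcm : ∀ {a : ℕ} (M : Matrix (Fin a) (Fin a) ℂ),
      f M.charpoly = ((t • (1 : Matrix (Fin a) (Fin a) (RatFunc ℂ))) - M.map c).det := by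
    intro a M
    rw [Matrix.charpoly, RingHom.map_det]
    congr 1
    ext i j
    by_cases hij : i = j <;>
      simp [hij, Matrix.charmatrix_apply, Matrix.map_apply, Matrix.one_apply,
        Matrix.diagonal_apply, ht, Matrix.sub_apply, Matrix.smul_apply, smul_eq_mul, hc, RingHom.comp_apply]
  have hmap : ∀ {a b d : ℕ} (M : Matrix (Fin a) (Fin b) ℂ) (N : Matrix (Fin b) (Fin d) ℂ),
      (M * N).map c = M.map c * N.map c := by
    intro a b d M N
    ext i j
    simp [Matrix.mul_apply, Matrix.map_apply, map_sum]
  rw [_root_.map_mul, map_pow, hcm, hcm, hmap, hmap, ← ht,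
    det_smul_one_sub_mul hm ht0]

theorem stmt_19 (m L N : ℕ) (hmL : m ≤ L) (hLN : L + m ≤ N)
    (w x : Fin m → ℂ) (hw : Function.Injective w) (hx : ∀ i, x i ≠ 0)
    (h : ℕ → ℂ) (hh : ∀ t : ℕ, h t = ∑ i, w i ^ t * x i)
    (H : ℕ → Matrix (Fin (N - L)) (Fin L) ℂ)
    (hH : ∀ s (j : Fin (N - L)) (k : Fin L), H s j k = h ((j : ℕ) + (k : ℕ) + s))
    (P : Matrix (Fin L) (Fin (N - L)) ℂ)
    (hP1 : H 0 * P * H 0 = H 0) (hP2 : P * H 0 * P = P)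
    (hP3 : (H 0 * P)ᴴ = H 0 * P) (hP4 : (P * H 0)ᴴ = P * H 0) :
    (P * H 1).charpoly = X ^ (L - m) * ∏ i, (X - C (w i)) := by
  have hmNL : m ≤ N - L := by omega
  set A : Matrix (Fin (N - L)) (Fin m) ℂ := Matrix.of (fun j i => w i ^ (j : ℕ) * x i) with hA
  set B : Matrix (Fin m) (Fin L) ℂ := Matrix.of (fun i k => w i ^ (k : ℕ)) with hB
  set D : Matrix (Fin m) (Fin m) ℂ := Matrix.diagonal w with hD
  have hH0 : H 0 = A * B := by
    ext j k
    rw [hH 0 j k, hh, Matrix.mul_apply]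
    refine Finset.sum_congr rfl fun i _ => ?_
    simp only [hA, hB, Matrix.of_apply]
    rw [add_zero, pow_add]; ring
  have hH1 : H 1 = A * (D * B) := by
    ext j k
    rw [hH 1 j k, hh, Matrix.mul_apply]
    refine Finset.sum_congr rfl fun i _ => ?_
    simp only [hA, hB, hD, Matrix.of_apply, Matrix.diagonal_mul]
    rw [pow_add, pow_add, pow_one]; ring
  -- left inverse of A
  set e : Fin m → Fin (N - L) := Fin.castLE hmNL with he
  set W : Matrix (Fin m) (Fin m) ℂ := A.submatrix e id with hW
  have hWeq : W = (Matrix.vandermonde w)ᵀ * Matrix.diagonal x := by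
    ext i k
    simp [hW, hA, Matrix.mul_apply, Matrix.vandermonde, Matrix.diagonal_apply,
      Finset.sum_ite_eq, mul_ite, he, Fin.coe_castLE]
  have hWdet : W.det ≠ 0 := by
    rw [hWeq, Matrix.det_mul, Matrix.det_transpose, Matrix.det_diagonal]
    exact mul_ne_zero (Matrix.det_vandermonde_ne_zero_iff.mpr hw)
      (Finset.prod_ne_zero_iff.mpr fun i _ => hx i)
  set S : Matrix (Fin m) (Fin (N - L)) ℂ := Matrix.of (fun i j => if e i = j then 1 else 0) with hS
  have hSA : S * A = W := by
    ext i k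
    simp [hS, Matrix.mul_apply, ite_mul, Finset.sum_ite_eq, hW]
  set A' : Matrix (Fin m) (Fin (N - L)) ℂ := W⁻¹ * S with hA'
  have hAinv : A' * A = 1 := by
    rw [hA', Matrix.mul_assoc, hSA, Matrix.nonsing_inv_mul _ (Ne.isUnit hWdet)]
  -- right inverse of B
  set e' : Fin m → Fin L := Fin.castLE hmL with he'
  set T : Matrix (Fin L) (Fin m) ℂ := Matrix.of (fun k i => if e' i = k then 1 else 0) with hT
  have hBT : B * T = Matrix.vandermonde w := by
    ext i i'
    simp [hT, hB, Matrix.mul_apply, mul_ite, Finset.sum_ite_eq, Matrix.vandermonde, he', Fin.coe_castLE]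
  set B' : Matrix (Fin L) (Fin m) ℂ := T * (Matrix.vandermonde w)⁻¹ with hB'
  have hBinv : B * B' = 1 := by
    rw [hB', ← Matrix.mul_assoc, hBT,
      Matrix.mul_nonsing_inv _ (Ne.isUnit (Matrix.det_vandermonde_ne_zero_iff.mpr hw))]
  -- key identity
  have h1 : A * B * P * (A * B) = A * B := by rw [← hH0]; exact hP1
  have key : B * (P * A) = 1 := by
    calc B * (P * A) = (A' * A) * (B * (P * A)) * (B * B') := by
          rw [hAinv, hBinv, one_mul, mul_one]
      _ = A' * (A * B * P * (A * B)) * B' := by simp only [Matrix.mul_assoc]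
      _ = A' * (A * B) * B' := by rw [h1]
      _ = (A' * A) * (B * B') := by simp only [Matrix.mul_assoc]
      _ = 1 := by rw [hAinv, hBinv, mul_one]
  have hPH1 : P * H 1 = (P * A) * (D * B) := by
    rw [hH1]; simp only [Matrix.mul_assoc]
  have hDB : (D * B) * (P * A) = D := by
    rw [Matrix.mul_assoc, key, Matrix.mul_one]
  rw [hPH1, charpoly_rect hmL (P * A) (D * B), hDB]
  congr 1
  -- charpoly of diagonal
  rw [Matrix.charpoly]
  have : Matrix.charmatrix D = Matrix.diagonal (fun i => (X : ℂ[X]) - C (w i)) := by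
    ext i j
    by_cases hij : i = j <;>
      simp [Matrix.charmatrix_apply, Matrix.diagonal_apply, hij, hD]
  rw [this, Matrix.det_diagonal]
end
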